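/- Let H be a graph containing two vertex-disjoint triangles. Then the complete 3-partite graph K_{1, ⌊(n-1)/2⌋, ⌈(n-1)/2⌉} on n vertices contains no copy of H, and contains exactly ⌊(n-1)²/4⌋ triangles; hence ex(n, K_3, H) ≥ ⌊(n-1)²/4⌋. -/

import Mathlib

/-- The complete 3-partite graph `K_{1, ⌊(n-1)/2⌋, ⌈(n-1)/2⌉}` on `n` vertices. -/
def K1abGraph (n : ℕ) : SimpleGraph (Σ i : Fin 3, ![Fin 1, Fin ((n - 1) / 2), Fin (n - 1 - (n - 1) / 2)] i) :=
  SimpleGraph.completeMultipartiteGraph _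

abbrev K1abV (n : ℕ) := Σ i : Fin 3, ![Fin 1, Fin ((n - 1) / 2), Fin (n - 1 - (n - 1) / 2)] i

instance K1ab_decEq (n : ℕ) :
    ∀ i : Fin 3, DecidableEq (![Fin 1, Fin ((n - 1) / 2), Fin (n - 1 - (n - 1) / 2)] i)
  | ⟨0, _⟩ => instDecidableEqFin _
  | ⟨1, _⟩ => instDecidableEqFin _
  | ⟨2, _⟩ => instDecidableEqFin _

instance K1ab_fintype (n : ℕ) :
    ∀ i : Fin 3, Fintype (![Fin 1, Fin ((n - 1) / 2), Fin (n - 1 - (n - 1) / 2)] i)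
  | ⟨0, _⟩ => Fin.fintype _
  | ⟨1, _⟩ => Fin.fintype _
  | ⟨2, _⟩ => Fin.fintype _

/-- The apex vertex. -/
def K1abApex (n : ℕ) : K1abV n := ⟨0, (0 : Fin 1)⟩

lemma K1ab_adj {n : ℕ} (x y : K1abV n) : (K1abGraph n).Adj x y ↔ x.1 ≠ y.1 := by
  simp [K1abGraph, SimpleGraph.completeMultipartiteGraph]

lemma K1ab_fst_zero {n : ℕ} (x : K1abV n) (hx : x.1 = 0) : x = K1abApex n := by
  obtain ⟨i, v⟩ := x
  subst hx
  exact congrArg (Sigma.mk (0 : Fin 3)) (Subsingleton.elim (α := Fin 1) v 0)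

lemma K1ab_fst_one {n : ℕ} (x : K1abV n) (hx : x.1 = 1) :
    ∃ p : Fin ((n - 1) / 2), x = ⟨1, p⟩ := by
  obtain ⟨i, v⟩ := x
  subst hx
  exact ⟨v, rfl⟩

lemma K1ab_fst_two {n : ℕ} (x : K1abV n) (hx : x.1 = 2) :
    ∃ q : Fin (n - 1 - (n - 1) / 2), x = ⟨2, q⟩ := by
  obtain ⟨i, v⟩ := x
  subst hx
  exact ⟨v, rfl⟩

/-- Every triangle of `K1abGraph n` contains the apex. -/
lemma K1ab_apex_mem {n : ℕ} {x y z : K1abV n}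
    (hxy : (K1abGraph n).Adj x y) (hxz : (K1abGraph n).Adj x z)
    (hyz : (K1abGraph n).Adj y z) :
    x = K1abApex n ∨ y = K1abApex n ∨ z = K1abApex n := by
  rw [K1ab_adj] at hxy hxz hyz
  have h1 : (x.1 : ℕ) < 3 := x.1.isLt
  have h2 : (y.1 : ℕ) < 3 := y.1.isLt
  have h3 : (z.1 : ℕ) < 3 := z.1.isLt
  have e1 : (x.1 : ℕ) ≠ y.1 := fun h => hxy (Fin.ext h)
  have e2 : (x.1 : ℕ) ≠ z.1 := fun h => hxz (Fin.ext h)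
  have e3 : (y.1 : ℕ) ≠ z.1 := fun h => hyz (Fin.ext h)
  have : (x.1 : ℕ) = 0 ∨ (y.1 : ℕ) = 0 ∨ (z.1 : ℕ) = 0 := by omega
  rcases this with h | h | h
  · exact Or.inl (K1ab_fst_zero _ (Fin.ext h))
  · exact Or.inr (Or.inl (K1ab_fst_zero _ (Fin.ext h)))
  · exact Or.inr (Or.inr (K1ab_fst_zero _ (Fin.ext h)))

lemma K1ab_free {n : ℕ} {W : Type*} (H : SimpleGraph W)
    (hH : ∃ a b c d e f : W, ([a, b, c, d, e, f] : List W).Nodup ∧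
      H.Adj a b ∧ H.Adj b c ∧ H.Adj a c ∧ H.Adj d e ∧ H.Adj e f ∧ H.Adj d f) :
    ¬ ∃ φ : H →g K1abGraph n, Function.Injective φ := by
  rintro ⟨φ, hφ⟩
  obtain ⟨a, b, c, d, e, f, hnd, hab, hbc, hac, hde, hef, hdf⟩ := hH
  have T1 := K1ab_apex_mem (φ.map_adj hab) (φ.map_adj hac) (φ.map_adj hbc)
  have T2 := K1ab_apex_mem (φ.map_adj hde) (φ.map_adj hdf) (φ.map_adj hef)
  simp only [List.nodup_cons, List.mem_cons, List.not_mem_nil, List.mem_singleton] at hnd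
  rcases T1 with h1 | h1 | h1 <;> rcases T2 with h2 | h2 | h2 <;>
    · have := hφ (h1.trans h2.symm); tauto

/-- Description of the triangles of `K1abGraph n`. -/
def K1abTri (n : ℕ) (p : Fin ((n - 1) / 2) × Fin (n - 1 - (n - 1) / 2)) :
    Finset (K1abV n) :=
  {K1abApex n, ⟨1, p.1⟩, ⟨2, p.2⟩}

lemma K1abTri_injective (n : ℕ) : Function.Injective (K1abTri n) := by
  rintro ⟨p, q⟩ ⟨p', q'⟩ h
  simp only [K1abTri, Finset.ext_iff, Finset.mem_insert, Finset.mem_singleton] at h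
  have h1 := (h ⟨1, p⟩).1 (Or.inr (Or.inl rfl))
  have h2 := (h ⟨2, q⟩).1 (Or.inr (Or.inr rfl))
  have hp : p = p' := by
    rcases h1 with h1 | h1 | h1
    · have hc := congrArg Sigma.fst h1
      simp [K1abApex] at hc
    · exact eq_of_heq (Sigma.mk.inj_iff.1 h1).2
    · have hc := congrArg Sigma.fst h1
      simp [K1abApex] at hc
  have hq : q = q' := by
    rcases h2 with h2 | h2 | h2
    · have hc := congrArg Sigma.fst h2
      simp [K1abApex] at hc
    · have hc := congrArg Sigma.fst h2
      simp [K1abApex] at hc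
    · exact eq_of_heq (Sigma.mk.inj_iff.1 h2).2
  simp [hp, hq]

set_option maxHeartbeats 1000000 in
lemma K1ab_cliqueSet (n : ℕ) :
    (K1abGraph n).cliqueSet 3 = Set.range (K1abTri n) := by
  ext s
  simp only [SimpleGraph.mem_cliqueSet_iff, Set.mem_range]
  constructor
  · intro hs
    rw [SimpleGraph.is3Clique_iff] at hs
    obtain ⟨x, y, z, hxy, hxz, hyz, hs'⟩ := hs
    rw [hs']
    rw [K1ab_adj] at hxy hxz hyz
    have key : ∀ u v w : K1abV n, u.1 = 0 → v.1 = 1 → w.1 = 2 →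
        ∃ p, ({u, v, w} : Finset (K1abV n)) = K1abTri n p := by
      intro u v w hu hv hw
      obtain ⟨p, rfl⟩ := K1ab_fst_one v hv
      obtain ⟨q, rfl⟩ := K1ab_fst_two w hw
      rw [K1ab_fst_zero u hu]
      exact ⟨(p, q), rfl⟩
    have h1 : (x.1 : ℕ) < 3 := x.1.isLt
    have h2 : (y.1 : ℕ) < 3 := y.1.isLt
    have h3 : (z.1 : ℕ) < 3 := z.1.isLt
    have e1 : (x.1 : ℕ) ≠ y.1 := fun h => hxy (Fin.ext h)
    have e2 : (x.1 : ℕ) ≠ z.1 := fun h => hxz (Fin.ext h)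
    have e3 : (y.1 : ℕ) ≠ z.1 := fun h => hyz (Fin.ext h)
    have hcases : ((x.1 : ℕ) = 0 ∧ (y.1 : ℕ) = 1 ∧ (z.1 : ℕ) = 2) ∨
        ((x.1 : ℕ) = 0 ∧ (y.1 : ℕ) = 2 ∧ (z.1 : ℕ) = 1) ∨
        ((x.1 : ℕ) = 1 ∧ (y.1 : ℕ) = 0 ∧ (z.1 : ℕ) = 2) ∨
        ((x.1 : ℕ) = 2 ∧ (y.1 : ℕ) = 0 ∧ (z.1 : ℕ) = 1) ∨
        ((x.1 : ℕ) = 1 ∧ (y.1 : ℕ) = 2 ∧ (z.1 : ℕ) = 0) ∨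
        ((x.1 : ℕ) = 2 ∧ (y.1 : ℕ) = 1 ∧ (z.1 : ℕ) = 0) := by omega
    rcases hcases with ⟨ha, hb, hc⟩ | ⟨ha, hb, hc⟩ | ⟨ha, hb, hc⟩ |
        ⟨ha, hb, hc⟩ | ⟨ha, hb, hc⟩ | ⟨ha, hb, hc⟩
    · obtain ⟨p, hp⟩ := key x y z (Fin.ext ha) (Fin.ext hb) (Fin.ext hc)
      exact ⟨p, by rw [← hp]⟩
    · obtain ⟨p, hp⟩ := key x z y (Fin.ext ha) (Fin.ext hc) (Fin.ext hb)
      exact ⟨p, by rw [← hp]; ext w; simp only [Finset.mem_insert,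
        Finset.mem_singleton]; tauto⟩
    · obtain ⟨p, hp⟩ := key y x z (Fin.ext hb) (Fin.ext ha) (Fin.ext hc)
      exact ⟨p, by rw [← hp]; ext w; simp only [Finset.mem_insert,
        Finset.mem_singleton]; tauto⟩
    · obtain ⟨p, hp⟩ := key y z x (Fin.ext hb) (Fin.ext hc) (Fin.ext ha)
      exact ⟨p, by rw [← hp]; ext w; simp only [Finset.mem_insert,
        Finset.mem_singleton]; tauto⟩
    · obtain ⟨p, hp⟩ := key z x y (Fin.ext hc) (Fin.ext ha) (Fin.ext hb)
      exact ⟨p, by rw [← hp]; ext w; simp only [Finset.mem_insert,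
        Finset.mem_singleton]; tauto⟩
    · obtain ⟨p, hp⟩ := key z y x (Fin.ext hc) (Fin.ext hb) (Fin.ext ha)
      exact ⟨p, by rw [← hp]; ext w; simp only [Finset.mem_insert,
        Finset.mem_singleton]; tauto⟩
  · rintro ⟨p, rfl⟩
    rw [K1abTri, SimpleGraph.is3Clique_triple_iff]
    refine ⟨?_, ?_, ?_⟩ <;> rw [K1ab_adj] <;> simp [K1abApex]

theorem stmt_16 {W : Type*} (n : ℕ) (hn : 1 ≤ n) (H : SimpleGraph W)
    (hH : ∃ a b c d e f : W, ([a, b, c, d, e, f] : List W).Nodup ∧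
      H.Adj a b ∧ H.Adj b c ∧ H.Adj a c ∧ H.Adj d e ∧ H.Adj e f ∧ H.Adj d f) :
    (¬ ∃ φ : H →g K1abGraph n, Function.Injective φ) ∧
    ((K1abGraph n).cliqueSet 3).ncard = (n - 1) ^ 2 / 4 ∧
    (∃ G : SimpleGraph (Fin n),
      (¬ ∃ φ : H →g G, Function.Injective φ) ∧
      (n - 1) ^ 2 / 4 ≤ (G.cliqueSet 3).ncard) := by
  have harith : (n - 1) / 2 * (n - 1 - (n - 1) / 2) = (n - 1) ^ 2 / 4 := by
    obtain ⟨k, hk⟩ : ∃ k, n - 1 = 2 * k ∨ n - 1 = 2 * k + 1 := ⟨(n - 1) / 2, by omega⟩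
    rcases hk with hk | hk <;> rw [hk]
    · have h1 : 2 * k / 2 = k := by omega
      have h2 : (2 * k) ^ 2 = k * k * 4 := by ring
      rw [h1, h2, Nat.mul_div_cancel _ (by norm_num)]
      have : 2 * k - k = k := by omega
      rw [this]
    · have h1 : (2 * k + 1) / 2 = k := by omega
      have h2 : (2 * k + 1) ^ 2 = (k * (k + 1)) * 4 + 1 := by ring
      rw [h1, h2]
      have h3 : ((k * (k + 1)) * 4 + 1) / 4 = k * (k + 1) := by omega
      rw [h3]
      congr 1
      omega
  have hcount : ((K1abGraph n).cliqueSet 3).ncard = (n - 1) ^ 2 / 4 := by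
    rw [K1ab_cliqueSet, ← Set.image_univ,
      Set.ncard_image_of_injective _ (K1abTri_injective n), Set.ncard_univ]
    simp [Nat.card_eq_fintype_card, harith]
  refine ⟨K1ab_free H hH, hcount, ?_⟩
  have hcard : Fintype.card (K1abV n) = n := by
    have c0 : Fintype.card (![Fin 1, Fin ((n - 1) / 2), Fin (n - 1 - (n - 1) / 2)] (0 : Fin 3))
        = 1 := (Fintype.card_congr (Equiv.cast rfl)).trans (Fintype.card_fin 1)
    have c1 : Fintype.card (![Fin 1, Fin ((n - 1) / 2), Fin (n - 1 - (n - 1) / 2)] (1 : Fin 3))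
        = (n - 1) / 2 := (Fintype.card_congr (Equiv.cast rfl)).trans (Fintype.card_fin _)
    have c2 : Fintype.card (![Fin 1, Fin ((n - 1) / 2), Fin (n - 1 - (n - 1) / 2)] (2 : Fin 3))
        = n - 1 - (n - 1) / 2 := (Fintype.card_congr (Equiv.cast rfl)).trans (Fintype.card_fin _)
    rw [Fintype.card_sigma, Fin.sum_univ_three, c0, c1, c2]
    omega
  obtain ⟨e⟩ : Nonempty (K1abV n ≃ Fin n) := by
    rw [← Fintype.card_eq, hcard, Fintype.card_fin]
  refine ⟨(K1abGraph n).map e.toEmbedding, ?_, ?_⟩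
  · rintro ⟨φ, hφ⟩
    refine K1ab_free (n := n) H hH
      ⟨⟨fun w => e.symm (φ w), fun {a b} h => ?_⟩, e.symm.injective.comp hφ⟩
    obtain ⟨-, a', b', hab, ha, hb⟩ := φ.map_adj h
    simp only [Equiv.toEmbedding_apply] at ha hb
    simpa [← ha, ← hb] using hab
  · rw [show (⇑e.toEmbedding : K1abV n → Fin n) = ⇑e from rfl, SimpleGraph.cliqueSet_map_of_equiv,
      Set.ncard_image_of_injective _ (Finset.map_injective _), hcount]
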